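/- There exists a circulant weighing matrix CW(198, 100); that is, there exists a vector a ∈ {0, 1, −1}^{198} such that the circulant matrix W = c(a) satisfies W Wᵀ = 100 I, where I is the 198×198 identity matrix. -/

import Mathlib

open Matrix

/-- The circulant matrix `c(a)` with entries `c(a)_{i,j} = a_{(j-i) mod n}`. -/
def circ {n : ℕ} (a : Fin n → ℝ) : Matrix (Fin n) (Fin n) ℝ :=
  Matrix.of fun i j => a (j - i)

def cw (i : Fin 198) : ℤ :=
  if Nat.testBit 51320596808572682488200109858824338326647236063311254324416 i.1 then 1 else if Nat.testBit 102019959322697348521834647060286432114757223999646143119872 i.1 then -1 else 0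

set_option maxRecDepth 100000 in
lemma cw_mem : ∀ i : Fin 198, cw i = 0 ∨ cw i = 1 ∨ cw i = -1 := by decide

set_option maxRecDepth 1000000 in
set_option maxHeartbeats 4000000 in
lemma cw_corr : ∀ d : Fin 198,
    (∑ k : Fin 198, cw k * cw (k - d)) = if d = 0 then 100 else 0 := by decide

/-- There exists a circulant weighing matrix `CW(198, 100)`. -/
theorem exists_CW_198_100 :
    ∃ a : Fin 198 → ℝ, (∀ s, a s ∈ ({0, 1, -1} : Set ℝ)) ∧
      circ a * (circ a)ᵀ = (100 : ℝ) • (1 : Matrix (Fin 198) (Fin 198) ℝ) := by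
  refine ⟨fun i => ((cw i : ℤ) : ℝ), ?_, ?_⟩
  · intro s
    rcases cw_mem s with h | h | h <;> simp [h]
  · ext i j
    have key := cw_corr (j - i)
    have reindex : (∑ k : Fin 198, ((cw (k - i) : ℝ)) * ((cw (k - j) : ℝ)))
        = ∑ k : Fin 198, ((cw k : ℝ)) * ((cw (k - (j - i)) : ℝ)) := by
      rw [← Equiv.sum_comp (Equiv.addRight i)
        (fun k => ((cw (k - i) : ℝ)) * ((cw (k - j) : ℝ)))]
      refine Finset.sum_congr rfl fun k _ => ?_
      have h1 : (Equiv.addRight i k) - i = k := by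
        simp [Equiv.addRight]
      have h2 : (Equiv.addRight i k) - j = k - (j - i) := by
        rw [Equiv.coe_addRight]
        rw [sub_sub_eq_add_sub]
      rw [h1, h2]
    simp only [circ, Matrix.mul_apply, Matrix.transpose_apply, Matrix.of_apply,
      Matrix.smul_apply, Matrix.one_apply, smul_eq_mul]
    rw [reindex]
    have : (∑ k : Fin 198, ((cw k : ℝ)) * ((cw (k - (j - i)) : ℝ)))
        = (((∑ k : Fin 198, cw k * cw (k - (j - i))) : ℤ) : ℝ) := by
      push_cast
      rfl
    rw [this, key]
    by_cases h : i = j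
    · subst h; simp
    · have h2 : j - i ≠ 0 := fun hc => h (by
        have := sub_eq_zero.mp hc
        exact this.symm)
      simp [h2, h]
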